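/- (Proposition 2.) Let X ⊂ ℝ^{n_x} be a nonempty compact set, let x : [0,∞) → ℝ^{n_x} be differentiable with x'(t) = f(x(t)) and x(t) ∈ X for all t ≥ 0, and let ẑ : [0,∞) → ℝ^{n_z} be differentiable with ẑ'(t) = A ẑ(t) + B h(x(t)) for all t ≥ 0. Let T̂ : ℝ^{n_x} → ℝ^{n_z} be continuously differentiable with PDE residual R and set R̄ := sup_{x∈X} ‖R(x)‖. Let Z ⊂ ℝ^{n_z} be a set containing T̂(X) and containing ẑ(t) for all t ≥ 0, let T̂* : ℝ^{n_z} → ℝ^{n_x} be Lipschitz with constant L ≥ 0 on Z, and define x̂(t) := T̂*(ẑ(t)) and E := sup_{x∈X} ‖T̂*(T̂(x)) − x‖, assumed finite. Let Q ∈ ℝ^{n_z×n_z} and P ∈ ℝ^{n_z×n_z} be symmetric positive definite with P A + Aᵀ P = −Q. Then limsup_{t→∞} ‖x̂(t) − x(t)‖ ≤ L·√(4·λ_max(P)/(λ_min(Q)·λ_min(P)))·‖Q^{−1/2}P‖·R̄ + E. -/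

import Mathlib

open Filter Matrix

/-- Euclidean space `ℝ^n`. -/
abbrev E (n : ℕ) := EuclideanSpace ℝ (Fin n)

/-- Smallest eigenvalue of a (Hermitian) real matrix. -/
noncomputable def lamMin {n : ℕ} (M : Matrix (Fin n) (Fin n) ℝ) : ℝ :=
  if h : M.IsHermitian then ⨅ i, h.eigenvalues i else 0

/-- Largest eigenvalue of a (Hermitian) real matrix. -/
noncomputable def lamMax {n : ℕ} (M : Matrix (Fin n) (Fin n) ℝ) : ℝ :=
  if h : M.IsHermitian then ⨆ i, h.eigenvalues i else 0

open scoped Classical in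
/-- The positive semidefinite square root `M^{1/2}` of a positive semidefinite matrix. -/
noncomputable def matSqrt {n : ℕ} (M : Matrix (Fin n) (Fin n) ℝ) : Matrix (Fin n) (Fin n) ℝ :=
  if h : M.PosSemidef then
    h.1.eigenvectorUnitary.1 * diagonal (fun i => Real.sqrt (h.1.eigenvalues i)) *
      (star h.1.eigenvectorUnitary : Matrix (Fin n) (Fin n) ℝ)
  else 0

/-- `M^{-1/2} := (M^{1/2})⁻¹`. -/
noncomputable def invSqrt {n : ℕ} (M : Matrix (Fin n) (Fin n) ℝ) : Matrix (Fin n) (Fin n) ℝ :=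
  (matSqrt M)⁻¹

/-- Operator norm of a matrix induced by the Euclidean norms. -/
noncomputable def opNorm {m n : ℕ} (M : Matrix (Fin m) (Fin n) ℝ) : ℝ :=
  ‖LinearMap.toContinuousLinearMap (Matrix.toEuclideanLin M)‖

/-- Matrix-vector multiplication as a map between Euclidean spaces. -/
def mv {m n : ℕ} (M : Matrix (Fin m) (Fin n) ℝ) (v : E n) : E m := WithLp.toLp 2 (M.mulVec v)

/-! ### Auxiliary lemmas -/

lemma mv_eq_clm {m n : ℕ} (M : Matrix (Fin m) (Fin n) ℝ) (v : E n) :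
    mv M v = LinearMap.toContinuousLinearMap (Matrix.toEuclideanLin M) v := rfl

lemma opNorm_nonneg' {m n : ℕ} (M : Matrix (Fin m) (Fin n) ℝ) : 0 ≤ opNorm M :=
  norm_nonneg _

lemma norm_mv_le {m n : ℕ} (M : Matrix (Fin m) (Fin n) ℝ) (v : E n) :
    ‖mv M v‖ ≤ opNorm M * ‖v‖ := by
  rw [mv_eq_clm]
  exact (LinearMap.toContinuousLinearMap (Matrix.toEuclideanLin M)).le_opNorm v

lemma mv_continuous {m n : ℕ} (M : Matrix (Fin m) (Fin n) ℝ) : Continuous (mv M) := by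
  have h := (LinearMap.toContinuousLinearMap (Matrix.toEuclideanLin M)).continuous
  simpa [funext fun v => mv_eq_clm M v] using h

lemma hasDerivAt_mv {m n : ℕ} (M : Matrix (Fin m) (Fin n) ℝ) {u : ℝ → E n} {u' : E n} {t : ℝ}
    (hu : HasDerivAt u u' t) : HasDerivAt (fun s => mv M (u s)) (mv M u') t := by
  have h := (LinearMap.toContinuousLinearMap (Matrix.toEuclideanLin M)).hasFDerivAt.comp_hasDerivAt t hu
  exact h

lemma mv_sub {m n : ℕ} (M : Matrix (Fin m) (Fin n) ℝ) (a b : E n) :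
    mv M (a - b) = mv M a - mv M b := by
  simp [mv, Matrix.mulVec_sub]

lemma mv_add' {n : ℕ} (M N : Matrix (Fin n) (Fin n) ℝ) (a : E n) :
    mv (M + N) a = mv M a + mv N a := by
  simp [mv, Matrix.add_mulVec]

lemma mv_neg' {n : ℕ} (M : Matrix (Fin n) (Fin n) ℝ) (a : E n) :
    mv (-M) a = -(mv M a) := by
  simp [mv, Matrix.neg_mulVec]

lemma mv_mv {m n o : ℕ} (M : Matrix (Fin m) (Fin n) ℝ) (N : Matrix (Fin n) (Fin o) ℝ) (v : E o) :
    mv M (mv N v) = mv (M * N) v := by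
  simp [mv, Matrix.mulVec_mulVec]

lemma inner_eq_dot {n : ℕ} (x y : E n) : (inner ℝ x y : ℝ) = (WithLp.ofLp x) ⬝ᵥ (WithLp.ofLp y) := by
  simp [PiLp.inner_apply, dotProduct, RCLike.inner_apply, mul_comm]

lemma inner_mv_left {m n : ℕ} (M : Matrix (Fin m) (Fin n) ℝ) (x : E n) (y : E m) :
    (inner ℝ (mv M x) y : ℝ) = inner ℝ x (mv Mᵀ y) := by
  rw [inner_eq_dot, inner_eq_dot]
  show (M *ᵥ WithLp.ofLp x) ⬝ᵥ (WithLp.ofLp y) = (WithLp.ofLp x) ⬝ᵥ (Mᵀ *ᵥ WithLp.ofLp y)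
  rw [dotProduct_comm, Matrix.dotProduct_mulVec, ← Matrix.mulVec_transpose,
    dotProduct_comm]

lemma inner_mv_symm {n : ℕ} (M : Matrix (Fin n) (Fin n) ℝ) (hM : M.IsHermitian)
    (x y : E n) : (inner ℝ (mv M x) y : ℝ) = inner ℝ x (mv M y) := by
  have hMt : Mᵀ = M := by
    have := hM.eq; rwa [Matrix.conjTranspose_eq_transpose_of_trivial] at this
  rw [inner_mv_left, hMt]

lemma quad_expand {n : ℕ} [NeZero n] (M : Matrix (Fin n) (Fin n) ℝ) (hM : M.IsHermitian) (v : E n) :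
    (inner ℝ v (mv M v) : ℝ) = ∑ i, hM.eigenvalues i * (inner ℝ v (hM.eigenvectorBasis i) : ℝ)^2 ∧
    ‖v‖^2 = ∑ i, (inner ℝ v (hM.eigenvectorBasis i) : ℝ)^2 := by
  set b := hM.eigenvectorBasis
  have hb : ∀ i, mv M (b i) = hM.eigenvalues i • (b i) := by
    intro i
    have := hM.mulVec_eigenvectorBasis i
    apply PiLp.ext; intro j
    have := congrFun this j
    simpa [mv] using this
  constructor
  · rw [← b.sum_inner_mul_inner v (mv M v)]
    congr 1; ext i
    have : (inner ℝ (b i) (mv M v) : ℝ) = hM.eigenvalues i * inner ℝ (b i) v := by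
      rw [← inner_mv_symm M hM, hb i, inner_smul_left]
      simp [real_inner_comm]
    rw [this, real_inner_comm (b i) v]; ring
  · have := b.sum_inner_mul_inner v v
    rw [real_inner_self_eq_norm_sq] at this
    rw [← this]; congr 1; ext i; rw [real_inner_comm (b i) v]; ring

lemma quad_le {n : ℕ} [NeZero n] (M : Matrix (Fin n) (Fin n) ℝ) (hM : M.IsHermitian) (v : E n) :
    lamMin M * ‖v‖^2 ≤ (inner ℝ v (mv M v) : ℝ) ∧ (inner ℝ v (mv M v) : ℝ) ≤ lamMax M * ‖v‖^2 := by
  obtain ⟨h1, h2⟩ := quad_expand M hM v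
  rw [h1, h2, lamMin, lamMax, dif_pos hM, dif_pos hM, Finset.mul_sum, Finset.mul_sum]
  constructor
  · refine Finset.sum_le_sum fun i _ => ?_
    exact mul_le_mul_of_nonneg_right (ciInf_le (Set.Finite.bddBelow (Set.finite_range _)) i)
      (sq_nonneg _)
  · refine Finset.sum_le_sum fun i _ => ?_
    exact mul_le_mul_of_nonneg_right (le_ciSup (Set.Finite.bddAbove (Set.finite_range _)) i)
      (sq_nonneg _)

lemma lamMin_pos {n : ℕ} [NeZero n] {M : Matrix (Fin n) (Fin n) ℝ} (hM : M.PosDef) :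
    0 < lamMin M := by
  rw [lamMin, dif_pos hM.1]
  obtain ⟨i0, _, hi0⟩ := Finset.exists_min_image Finset.univ hM.1.eigenvalues
    ⟨Classical.arbitrary (Fin n), Finset.mem_univ _⟩
  exact lt_of_lt_of_le (hM.eigenvalues_pos i0)
    (le_ciInf fun j => hi0 j (Finset.mem_univ _))

lemma lamMin_le_lamMax {n : ℕ} [NeZero n] {M : Matrix (Fin n) (Fin n) ℝ} (hM : M.IsHermitian) :
    lamMin M ≤ lamMax M := by
  rw [lamMin, lamMax, dif_pos hM, dif_pos hM]
  exact le_trans (ciInf_le (Set.Finite.bddBelow (Set.finite_range _)) (Classical.arbitrary (Fin n)))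
    (le_ciSup (Set.Finite.bddAbove (Set.finite_range _)) _)

lemma matSqrt_spec {n : ℕ} (M : Matrix (Fin n) (Fin n) ℝ) (h : M.PosSemidef) :
    (matSqrt M).IsHermitian ∧ matSqrt M * matSqrt M = M := by
  unfold matSqrt
  rw [dif_pos h]
  set U := h.1.eigenvectorUnitary
  have hUU : (star U : Matrix (Fin n) (Fin n) ℝ) * U.1 = 1 := Unitary.coe_star_mul_self U
  constructor
  · simp [Matrix.IsHermitian, Matrix.conjTranspose_mul, Matrix.mul_assoc, Matrix.star_eq_conjTranspose]
  · have hs := h.1.spectral_theorem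
    rw [RCLike.ofReal_real_eq_id, Function.id_comp] at hs
    conv_rhs => rw [hs]
    rw [Unitary.conjStarAlgAut_apply]
    have hD : diagonal (fun i => Real.sqrt (h.1.eigenvalues i)) *
        diagonal (fun i => Real.sqrt (h.1.eigenvalues i)) = diagonal h.1.eigenvalues := by
      rw [diagonal_mul_diagonal]
      congr 1; funext i; exact Real.mul_self_sqrt (h.eigenvalues_nonneg i)
    calc _ = U.1 * diagonal (fun i => Real.sqrt (h.1.eigenvalues i)) *
          ((star U : Matrix (Fin n) (Fin n) ℝ) * U.1) *
          diagonal (fun i => Real.sqrt (h.1.eigenvalues i)) *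
          (star U : Matrix (Fin n) (Fin n) ℝ) := by simp only [Matrix.mul_assoc]
      _ = _ := by rw [hUU, Matrix.mul_one, Matrix.mul_assoc U.1, hD]

lemma decay (V V' : ℝ → ℝ) (δ : ℝ)
    (hd : ∀ t ≥ (0:ℝ), HasDerivAt V (V' t) t)
    (a b : ℝ) (ha : 0 ≤ a) (hab : a ≤ b)
    (hneg : ∀ t ∈ Set.Ioo a b, V' t ≤ -δ) :
    V b + δ * b ≤ V a + δ * a := by
  set g : ℝ → ℝ := fun t => V t + δ * t with hg
  have hder : ∀ t ∈ Set.Ioo a b, HasDerivAt g (V' t + δ) t := fun t ht =>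
    (hd t (le_trans ha ht.1.le)).add ((hasDerivAt_id t).const_mul δ |>.congr_deriv (mul_one δ))
  have hmono : AntitoneOn g (Set.Icc a b) := by
    apply antitoneOn_of_deriv_nonpos (convex_Icc a b)
    · intro t ht
      exact ((hd t (le_trans ha ht.1)).add
        ((hasDerivAt_id t).const_mul δ |>.congr_deriv (mul_one δ))).continuousAt.continuousWithinAt
    · rw [interior_Icc]
      exact fun t ht => (hder t ht).differentiableAt.differentiableWithinAt
    · rw [interior_Icc]
      intro t ht
      rw [(hder t ht).deriv]
      linarith [hneg t ht]
  exact hmono (Set.left_mem_Icc.2 hab) (Set.right_mem_Icc.2 hab) hab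

lemma barrier (V V' : ℝ → ℝ) (M δ : ℝ) (hδ : 0 < δ)
    (hd : ∀ t ≥ (0:ℝ), HasDerivAt V (V' t) t)
    (hneg : ∀ t ≥ (0:ℝ), M ≤ V t → V' t ≤ -δ) :
    ∀ᶠ t in atTop, V t ≤ M := by
  have step1 : ∃ t₀ ≥ (0:ℝ), V t₀ ≤ M := by
    by_contra hcon
    push_neg at hcon
    have hbig : ∀ t ≥ (0:ℝ), M < V t := hcon
    set b : ℝ := (V 0 - M) / δ + 1 with hb
    have hb0 : 0 ≤ b := by
      have h1 : M < V 0 := hbig 0 le_rfl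
      have h2 : 0 < (V 0 - M) / δ := div_pos (by linarith) hδ
      rw [hb]; linarith
    have := decay V V' δ hd 0 b le_rfl hb0 (fun t ht => hneg t ht.1.le (hbig t ht.1.le).le)
    have hVb : M < V b := hbig b hb0
    have : V b ≤ V 0 - δ * b := by linarith
    rw [hb] at this
    have hδb : δ * ((V 0 - M) / δ + 1) = (V 0 - M) + δ := by field_simp
    linarith [hδb ▸ this]
  obtain ⟨t₀, ht₀, hVt₀⟩ := step1
  rw [eventually_atTop]
  refine ⟨t₀, fun t₁ ht₁ => ?_⟩
  by_contra hcon
  push_neg at hcon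
  set S : Set ℝ := Set.Icc t₀ t₁ ∩ V ⁻¹' (Set.Iic M) with hS
  have hSne : S.Nonempty := ⟨t₀, Set.left_mem_Icc.2 ht₁, hVt₀⟩
  have hScl : IsClosed S := by
    apply ContinuousOn.preimage_isClosed_of_isClosed _ isClosed_Icc isClosed_Iic
    intro t ht
    exact (hd t (le_trans ht₀ ht.1)).continuousAt.continuousWithinAt
  have hSbdd : BddAbove S := ⟨t₁, fun t ht => ht.1.2⟩
  set s := sSup S with hs
  have hsS : s ∈ S := hScl.csSup_mem hSne hSbdd
  have hst₁ : s < t₁ := by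
    rcases lt_or_eq_of_le hsS.1.2 with h | h
    · exact h
    · exact absurd (h ▸ hsS.2) (not_le.2 hcon)
  have hmax : ∀ t ∈ Set.Ioo s t₁, M < V t := by
    intro t ht
    by_contra hle
    push_neg at hle
    have : t ∈ S := ⟨⟨le_trans hsS.1.1 ht.1.le, ht.2.le⟩, hle⟩
    exact absurd (le_csSup hSbdd this) (not_le.2 ht.1)
  have := decay V V' δ hd s t₁ (le_trans ht₀ hsS.1.1) hst₁.le
    (fun t ht => hneg t (le_trans ht₀ (le_trans hsS.1.1 ht.1.le)) (hmax t ht).le)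
  have : V t₁ ≤ V s - δ * (t₁ - s) := by linarith
  have hVs : V s ≤ M := hsS.2
  nlinarith


lemma Vprime_eq {n : ℕ} (A P Q : Matrix (Fin n) (Fin n) ℝ) (hP : P.IsHermitian)
    (hLyap : P * A + Aᵀ * P = -Q) (v w : E n) :
    (inner ℝ v (mv P (mv A v - w)) : ℝ) + inner ℝ (mv A v - w) (mv P v)
      = -(inner ℝ v (mv Q v) : ℝ) - 2 * inner ℝ v (mv P w) := by
  rw [mv_sub, inner_sub_right, inner_sub_left]
  have h1 : (inner ℝ v (mv P (mv A v)) : ℝ) + inner ℝ (mv A v) (mv P v)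
      = -(inner ℝ v (mv Q v) : ℝ) := by
    rw [inner_mv_left A v (mv P v), mv_mv, mv_mv, ← inner_add_right, ← mv_add', hLyap,
      mv_neg', inner_neg_right]
  have h2 : (inner ℝ w (mv P v) : ℝ) = inner ℝ v (mv P w) := by
    rw [← inner_mv_symm P hP w v, real_inner_comm]
  linarith [h1, h2]

lemma sq_le_imp {r a : ℝ} (hr : 0 ≤ r) (ha : 0 ≤ a) (hsq : r^2 ≤ a^2) : r ≤ a := by
  nlinarith

lemma quad_ineq {a c ε : ℝ} (hc : 0 ≤ c) (hε : 0 < ε) (hra : 2*c + ε ≤ a) :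
    -a^2 + 2*c*a ≤ -((2*c+ε)*ε) := by
  nlinarith

lemma div_step {lm lq r2 x : ℝ} (hlm : 0 < lm) (hlq : 0 < lq) (hh : lm * r2 / lq ≤ lm * x) :
    r2 ≤ lq * x := by
  rw [div_le_iff₀ hlq] at hh
  nlinarith

lemma final_step {lp V Mthr x : ℝ} (hlp : 0 < lp) (h1 : lp * x ≤ V) (h2 : V ≤ Mthr) :
    x ≤ Mthr / lp := by
  rw [le_div_iff₀ hlp]
  nlinarith

lemma eqK {lmax lq lp r K Mthr : ℝ} (hK2 : K^2 = lmax/(lq*lp)) (hM : Mthr = lmax*r^2/lq)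
    (hlq : lq ≠ 0) (hlp : lp ≠ 0) : (r*K)^2 = Mthr/lp := by
  rw [mul_pow, hK2, hM]
  field_simp

theorem stmt7 {nx ny nz : ℕ}
    (f : E nx → E nx) (hf : Continuous f)
    (h : E nx → E ny) (hh : Continuous h)
    (A : Matrix (Fin nz) (Fin nz) ℝ) (B : Matrix (Fin nz) (Fin ny) ℝ)
    (X : Set (E nx)) (hXne : X.Nonempty) (hXc : IsCompact X)
    (x : ℝ → E nx) (hx : ∀ t ≥ (0:ℝ), HasDerivAt x (f (x t)) t)
    (hxX : ∀ t ≥ (0:ℝ), x t ∈ X)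
    (zh : ℝ → E nz)
    (hz : ∀ t ≥ (0:ℝ), HasDerivAt zh (mv A (zh t) + mv B (h (x t))) t)
    (T : E nx → E nz) (hT : ContDiff ℝ 1 T)
    (R : E nx → E nz)
    (hR : ∀ p, R p = fderiv ℝ T p (f p) - mv A (T p) - mv B (h p))
    (Rbar : ℝ) (hRbar : Rbar = sSup ((fun p => ‖R p‖) '' X))
    (Z : Set (E nz)) (hTZ : T '' X ⊆ Z) (hzZ : ∀ t ≥ (0:ℝ), zh t ∈ Z)
    (Ts : E nz → E nx) (L : ℝ) (hL : 0 ≤ L)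
    (hLip : ∀ z₁ ∈ Z, ∀ z₂ ∈ Z, ‖Ts z₁ - Ts z₂‖ ≤ L * ‖z₁ - z₂‖)
    (Err : ℝ) (hErr : Err = sSup ((fun p => ‖Ts (T p) - p‖) '' X))
    (hbdd : BddAbove ((fun p => ‖Ts (T p) - p‖) '' X))
    (Q P : Matrix (Fin nz) (Fin nz) ℝ) (hQ : Q.PosDef) (hP : P.PosDef)
    (hLyap : P * A + Aᵀ * P = -Q) :
    limsup (fun t => ‖Ts (zh t) - x t‖) atTop ≤
      L * Real.sqrt (4 * lamMax P / (lamMin Q * lamMin P)) * opNorm (invSqrt Q * P) * Rbar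
        + Err := by
  -- continuity and boundedness of the residual
  have hRcont : Continuous R := by
    have : R = fun p => fderiv ℝ T p (f p) - mv A (T p) - mv B (h p) := funext hR
    rw [this]
    exact (((hT.continuous_fderiv one_ne_zero).clm_apply hf).sub
      ((mv_continuous A).comp hT.continuous)).sub ((mv_continuous B).comp hh)
  have hRbdd : BddAbove ((fun p => ‖R p‖) '' X) :=
    (hXc.image (hRcont.norm)).bddAbove
  have hRle : ∀ p ∈ X, ‖R p‖ ≤ Rbar := by
    intro p hp
    rw [hRbar]
    exact le_csSup hRbdd ⟨p, hp, rfl⟩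
  have hRbar0 : 0 ≤ Rbar := by
    obtain ⟨p, hp⟩ := hXne
    exact le_trans (norm_nonneg _) (hRle p hp)
  -- pointwise bound
  have hpt : ∀ t ≥ (0:ℝ), ‖Ts (zh t) - x t‖ ≤ L * ‖zh t - T (x t)‖ + Err := by
    intro t ht
    calc ‖Ts (zh t) - x t‖ ≤ ‖Ts (zh t) - Ts (T (x t))‖ + ‖Ts (T (x t)) - x t‖ :=
          norm_sub_le_norm_sub_add_norm_sub _ _ _
      _ ≤ L * ‖zh t - T (x t)‖ + Err := by
          refine add_le_add (hLip _ (hzZ t ht) _ (hTZ ⟨x t, hxX t ht, rfl⟩)) ?_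
          rw [hErr]
          exact le_csSup hbdd ⟨x t, hxX t ht, rfl⟩
  -- coboundedness for limsup
  have hbddge : IsBoundedUnder (· ≥ ·) atTop (fun t => ‖Ts (zh t) - x t‖) :=
    isBoundedUnder_of ⟨0, fun t => norm_nonneg _⟩
  have hcobdd : IsCoboundedUnder (· ≤ ·) atTop (fun t => ‖Ts (zh t) - x t‖) :=
    hbddge.isCoboundedUnder_le
  have hCnn : 0 ≤ L * Real.sqrt (4 * lamMax P / (lamMin Q * lamMin P))
      * opNorm (invSqrt Q * P) * Rbar :=
    mul_nonneg (mul_nonneg (mul_nonneg hL (Real.sqrt_nonneg _)) (opNorm_nonneg' _)) hRbar0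
  rcases Nat.eq_zero_or_pos nz with h0 | hpos
  · -- degenerate case: trivial state space
    subst h0
    have hev : ∀ᶠ t in atTop, ‖Ts (zh t) - x t‖ ≤ Err := by
      filter_upwards [eventually_ge_atTop (0:ℝ)] with t ht
      have h1 := hpt t ht
      have h2 : zh t - T (x t) = 0 := Subsingleton.elim _ _
      rw [h2, norm_zero, mul_zero, zero_add] at h1
      exact h1
    calc limsup (fun t => ‖Ts (zh t) - x t‖) atTop ≤ Err := limsup_le_of_le hcobdd hev
      _ ≤ _ := le_add_of_nonneg_left hCnn
  haveI : NeZero nz := ⟨hpos.ne'⟩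
  -- setup
  have hQps : Q.PosSemidef := hQ.posSemidef
  set S : Matrix (Fin nz) (Fin nz) ℝ := matSqrt Q with hSdef
  have hSherm : S.IsHermitian := (matSqrt_spec Q hQps).1
  have hSS : S * S = Q := (matSqrt_spec Q hQps).2
  have hSdetu : IsUnit S.det := by
    rw [isUnit_iff_ne_zero]
    intro hdet
    have : Q.det = 0 := by rw [← hSS, Matrix.det_mul, hdet, mul_zero]
    exact absurd this (ne_of_gt hQ.det_pos)
  have hSinv : S * S⁻¹ = 1 := Matrix.mul_nonsing_inv S hSdetu
  -- the error signal and its derivative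
  set e : ℝ → E nz := fun t => zh t - T (x t) with he
  set e' : ℝ → E nz := fun t => mv A (e t) - R (x t) with he'
  have hde : ∀ t ≥ (0:ℝ), HasDerivAt e (e' t) t := by
    intro t ht
    have hTd : HasDerivAt (fun s => T (x s)) (fderiv ℝ T (x t) (f (x t))) t :=
      ((hT.differentiable one_ne_zero (x t)).hasFDerivAt).comp_hasDerivAt t (hx t ht)
    have hder := (hz t ht).sub hTd
    have heq : e' t = mv A (zh t) + mv B (h (x t)) - fderiv ℝ T (x t) (f (x t)) := by
      show mv A (zh t - T (x t)) - R (x t) = _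
      rw [hR (x t), mv_sub]
      abel
    rw [heq]
    exact hder
  -- the Lyapunov function
  set V : ℝ → ℝ := fun t => (inner ℝ (e t) (mv P (e t)) : ℝ) with hV
  set V' : ℝ → ℝ := fun t => (inner ℝ (e t) (mv P (e' t)) : ℝ) + inner ℝ (e' t) (mv P (e t)) with hV'
  have hdV : ∀ t ≥ (0:ℝ), HasDerivAt V (V' t) t := by
    intro t ht
    exact HasDerivAt.inner ℝ (hde t ht) (hasDerivAt_mv P (hde t ht))
  -- the quantitative bound on V'
  set c : ℝ := opNorm (invSqrt Q * P) * Rbar with hc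
  have hc0 : 0 ≤ c := mul_nonneg (opNorm_nonneg' _) hRbar0
  have hVd : ∀ t ≥ (0:ℝ), V' t ≤ -‖mv S (e t)‖^2 + 2 * c * ‖mv S (e t)‖ := by
    intro t ht
    have key : V' t = -(inner ℝ (e t) (mv Q (e t)) : ℝ) - 2 * inner ℝ (e t) (mv P (R (x t))) :=
      Vprime_eq A P Q hP.1 hLyap (e t) (R (x t))
    have hQv : (inner ℝ (e t) (mv Q (e t)) : ℝ) = ‖mv S (e t)‖^2 := by
      rw [← hSS, ← mv_mv, ← inner_mv_symm S hSherm (e t) (mv S (e t)), real_inner_self_eq_norm_sq]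
    have hPw : (inner ℝ (e t) (mv P (R (x t))) : ℝ)
        = inner ℝ (mv S (e t)) (mv (invSqrt Q * P) (R (x t))) := by
      have hiq : invSqrt Q = S⁻¹ := rfl
      rw [hiq, inner_mv_symm S hSherm (e t), mv_mv, ← Matrix.mul_assoc, hSinv, Matrix.one_mul]
    have habs : |(inner ℝ (e t) (mv P (R (x t))) : ℝ)| ≤ c * ‖mv S (e t)‖ := by
      rw [hPw]
      calc |(inner ℝ (mv S (e t)) (mv (invSqrt Q * P) (R (x t))) : ℝ)|
          ≤ ‖mv S (e t)‖ * ‖mv (invSqrt Q * P) (R (x t))‖ := abs_real_inner_le_norm _ _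
        _ ≤ ‖mv S (e t)‖ * (opNorm (invSqrt Q * P) * ‖R (x t)‖) :=
            mul_le_mul_of_nonneg_left (norm_mv_le _ _) (norm_nonneg _)
        _ ≤ ‖mv S (e t)‖ * (opNorm (invSqrt Q * P) * Rbar) := by
            refine mul_le_mul_of_nonneg_left ?_ (norm_nonneg _)
            exact mul_le_mul_of_nonneg_left (hRle _ (hxX t ht)) (opNorm_nonneg' _)
        _ = c * ‖mv S (e t)‖ := by rw [hc]; ring
    rw [key, hQv]
    have habs2 := abs_le.1 habs
    linarith [habs2.1, habs2.2]
  -- positivity of eigenvalue quantities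
  have hlQ : 0 < lamMin Q := lamMin_pos hQ
  have hlP : 0 < lamMin P := lamMin_pos hP
  have hlPmax : 0 < lamMax P := lt_of_lt_of_le hlP (lamMin_le_lamMax hP.1)
  set K : ℝ := Real.sqrt (lamMax P / (lamMin Q * lamMin P)) with hK
  have hK0 : 0 ≤ K := Real.sqrt_nonneg _
  have hKsq : K^2 = lamMax P / (lamMin Q * lamMin P) :=
    Real.sq_sqrt (le_of_lt (div_pos hlPmax (mul_pos hlQ hlP)))
  -- the constant in the statement equals L * (2 * K) * c
  have hconst : L * Real.sqrt (4 * lamMax P / (lamMin Q * lamMin P)) * opNorm (invSqrt Q * P)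
      * Rbar = L * (2 * K) * c := by
    have h4 : 4 * lamMax P / (lamMin Q * lamMin P) = 4 * (lamMax P / (lamMin Q * lamMin P)) := by
      ring
    rw [h4, Real.sqrt_mul (by norm_num : (0:ℝ) ≤ 4), show Real.sqrt 4 = 2 by
      rw [show (4:ℝ) = 2^2 by norm_num, Real.sqrt_sq (by norm_num : (0:ℝ) ≤ 2)], hK, hc]
    ring
  rw [hconst]
  -- main estimate: for every ε > 0
  refine le_of_forall_pos_le_add fun ε' hε' => ?_
  set ε : ℝ := ε' / (L * K + 1) with hε
  have hLK1 : 0 < L * K + 1 := by positivity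
  have hεpos : 0 < ε := div_pos hε' hLK1
  set r : ℝ := 2 * c + ε with hr
  have hr0 : 0 < r := by rw [hr]; linarith
  set δ : ℝ := r * ε with hδdef
  have hδ : 0 < δ := mul_pos hr0 hεpos
  set Mthr : ℝ := lamMax P * r^2 / lamMin Q with hMthr
  have hbar : ∀ᶠ t in atTop, V t ≤ Mthr := by
    apply barrier V V' Mthr δ hδ hdV
    intro t ht hMV
    have hquadP2 : (inner ℝ (e t) (mv P (e t)) : ℝ) ≤ lamMax P * ‖e t‖^2 := (quad_le P hP.1 (e t)).2
    have hquadQ1 : lamMin Q * ‖e t‖^2 ≤ (inner ℝ (e t) (mv Q (e t)) : ℝ) := (quad_le Q hQ.1 (e t)).1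
    have hQv : (inner ℝ (e t) (mv Q (e t)) : ℝ) = ‖mv S (e t)‖^2 := by
      rw [← hSS, ← mv_mv, ← inner_mv_symm S hSherm (e t) (mv S (e t)), real_inner_self_eq_norm_sq]
    have h1 : lamMax P * r^2 / lamMin Q ≤ lamMax P * ‖e t‖^2 := le_trans (hMthr ▸ hMV) hquadP2
    have h2 : r^2 ≤ lamMin Q * ‖e t‖^2 := div_step hlPmax hlQ h1
    have h3 : r^2 ≤ ‖mv S (e t)‖^2 := by rw [← hQv]; linarith
    have h5 : r ≤ ‖mv S (e t)‖ := sq_le_imp hr0.le (norm_nonneg _) h3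
    have h6 := hVd t ht
    have h7 : -‖mv S (e t)‖^2 + 2*c*‖mv S (e t)‖ ≤ -((2*c+ε)*ε) :=
      quad_ineq hc0 hεpos (hr ▸ h5)
    rw [hδdef, hr]
    linarith
  -- conclude
  have hfinal : ∀ᶠ t in atTop, ‖Ts (zh t) - x t‖ ≤ L * (2 * K) * c + Err + ε' := by
    filter_upwards [hbar, eventually_ge_atTop (0:ℝ)] with t hVt ht
    have hquadP1 : lamMin P * ‖e t‖^2 ≤ (inner ℝ (e t) (mv P (e t)) : ℝ) := (quad_le P hP.1 (e t)).1
    have h1 : ‖e t‖^2 ≤ Mthr / lamMin P := final_step hlP hquadP1 hVt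
    have h2 : (r * K)^2 = Mthr / lamMin P := eqK hKsq hMthr hlQ.ne' hlP.ne'
    have hne : ‖e t‖ ≤ r * K :=
      sq_le_imp (norm_nonneg _) (mul_nonneg hr0.le hK0) (by rw [h2]; exact h1)
    calc ‖Ts (zh t) - x t‖ ≤ L * ‖e t‖ + Err := hpt t ht
      _ ≤ L * (r * K) + Err := add_le_add_left (mul_le_mul_of_nonneg_left hne hL) _
      _ = L * (2 * K) * c + Err + L * K * ε := by rw [hr]; ring
      _ ≤ L * (2 * K) * c + Err + ε' := by
          have hLKε : L * K * ε ≤ ε' := by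
            rw [hε, div_eq_mul_inv]
            calc L * K * (ε' * (L * K + 1)⁻¹) = ε' * ((L * K) * (L * K + 1)⁻¹) := by ring
              _ ≤ ε' * 1 := by
                  refine mul_le_mul_of_nonneg_left ?_ hε'.le
                  rw [mul_inv_le_iff₀ hLK1, one_mul]
                  linarith [mul_nonneg hL hK0]
              _ = ε' := mul_one _
          linarith
  exact limsup_le_of_le hcobdd hfinal
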